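/- Consider the generalized Nash equilibrium problem with a shared constraint and optimization agents only: agents i = 1,…,N, with f_i : ℝ^n → ℝ continuously differentiable and f_i(·, x_{-i}) convex for every fixed x_{-i}, and each agent's feasible set K_i(x_{-i}) = {x_i ∈ ℝ^{n_i} : (x_i, x_{-i}) ∈ X} for a closed convex set X ⊆ ℝ^n. If x* solves VI(X, F) with F(x) = (∇_{x_1} f_1(x), …, ∇_{x_N} f_N(x)), then x* is a generalized Nash equilibrium; such a solution is called a variational equilibrium of the generalized Nash equilibrium problem. -/

import Mathlib

open RealInnerProductSpace

/-- First-order condition: a convex differentiable function lies above its tangent. -/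
lemma convex_grad_le {E : Type*} [NormedAddCommGroup E] [InnerProductSpace ℝ E]
    [CompleteSpace E] {g : E → ℝ} {G x y : E}
    (hg : ConvexOn ℝ Set.univ g) (hG : HasGradientAt g G x) :
    g x + ⟪G, y - x⟫ ≤ g y := by
  rcases eq_or_ne y x with rfl | hne
  · simp
  · have hF : HasFDerivAt g (InnerProductSpace.toDual ℝ E G) x := hG
    set c : ℝ → E := fun t => (AffineMap.lineMap x y : ℝ →ᵃ[ℝ] E) t with hc
    have hcapp : ∀ t, c t = t • (y - x) + x := fun t => AffineMap.lineMap_apply x y t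
    have hcderiv : HasDerivAt c (y - x) 0 := by
      have : HasDerivAt (fun t : ℝ => t • (y - x) + x) (y - x) 0 := by
        simpa using ((hasDerivAt_id (0:ℝ)).smul_const (y - x)).add_const x
      simpa [funext hcapp] using this
    have hc0 : c 0 = x := by simp [hcapp]
    have hF' : HasFDerivAt g (InnerProductSpace.toDual ℝ E G) (c 0) := hc0.symm ▸ hF
    have hphi : HasDerivAt (g ∘ c) ⟪G, y - x⟫ 0 := by
      simpa [InnerProductSpace.toDual_apply_apply] using hF'.comp_hasDerivAt 0 hcderiv
    have hconv : ConvexOn ℝ Set.univ (g ∘ c) := by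
      have := hg.comp_affineMap (AffineMap.lineMap x y : ℝ →ᵃ[ℝ] E)
      simpa [hc, Function.comp] using this
    have hslope := hconv.le_slope_of_hasDerivAt (Set.mem_univ 0) (Set.mem_univ 1)
      zero_lt_one hphi
    have : slope (g ∘ c) 0 1 = g y - g x := by
      simp [slope_def_field, Function.comp, hcapp, hc0]
    linarith [hslope.trans_eq this]

/-- Variational equilibrium: for a GNEP with shared constraint
Kᵢ(x₋ᵢ) = {xᵢ : (xᵢ, x₋ᵢ) ∈ X}, X closed convex, any solution of VI(X, F)
with F(x) = (∇_{x₁}f₁(x), …, ∇_{x_N}f_N(x)) is a generalized Nash equilibrium. -/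
theorem stmt_15 {N : ℕ} {n : Fin N → ℕ}
    (f : Fin N → ((j : Fin N) → EuclideanSpace ℝ (Fin (n j))) → ℝ)
    (X : Set ((j : Fin N) → EuclideanSpace ℝ (Fin (n j))))
    (hXclosed : IsClosed X) (hXconv : Convex ℝ X)
    (hf : ∀ i, ContDiff ℝ 1 (f i))
    (hfconv : ∀ i x, ConvexOn ℝ Set.univ (fun xi => f i (Function.update x i xi)))
    (K : (i : Fin N) → ((j : Fin N) → EuclideanSpace ℝ (Fin (n j))) →
      Set (EuclideanSpace ℝ (Fin (n i))))
    (hK : ∀ i x, K i x = {xi | Function.update x i xi ∈ X})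
    (xs : (j : Fin N) → EuclideanSpace ℝ (Fin (n j)))
    -- xs solves VI(X, F)
    (hxsX : xs ∈ X)
    (hVI : ∀ x ∈ X,
      0 ≤ ∑ i, ⟪gradient (fun xi => f i (Function.update xs i xi)) (xs i),
        x i - xs i⟫) :
    -- xs is a generalized Nash equilibrium
    ∀ i : Fin N, xs i ∈ K i xs ∧
      ∀ xi ∈ K i xs, f i xs ≤ f i (Function.update xs i xi) := by
  intro i
  have hself : Function.update xs i (xs i) = xs := Function.update_eq_self i xs
  constructor
  · rw [hK]; simpa [hself] using hxsX
  · intro xi hxi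
    rw [hK] at hxi
    -- the function g = f i ∘ update xs i is differentiable at xs i
    have hdiff : DifferentiableAt ℝ (fun y => f i (Function.update xs i y)) (xs i) := by
      have h1 : DifferentiableAt ℝ (f i) (Function.update xs i (xs i)) :=
        ((hf i).differentiable one_ne_zero).differentiableAt
      exact h1.comp (xs i) (hasFDerivAt_update xs (xs i)).differentiableAt
    have hgrad := hdiff.hasGradientAt
    -- use VI with x = update xs i xi
    have hsum := hVI (Function.update xs i xi) hxi
    have hsum' : (0:ℝ) ≤ ⟪gradient (fun y => f i (Function.update xs i y)) (xs i),
        xi - xs i⟫ := by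
      rw [Finset.sum_eq_single i] at hsum
      · simpa using hsum
      · intro j _ hj
        simp [Function.update_of_ne hj]
      · simp
    have hkey := convex_grad_le (hfconv i xs) hgrad (y := xi)
    simp only [hself] at hkey
    linarith
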